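/- Let ℓ ≥ 4 be an even integer and let S* = ⟨2ℓ, 2ℓ+2, 2ℓ+4, 4ℓ+5, ℓ(ℓ+2)+1⟩. Then the genus of S* (the number of positive integers not in S*) equals ℓ²/2 + 2ℓ. -/

import Mathlib

/-- membership of `m` in the "half" semigroup U = ∪ₖ [k·2h, k·2h+2k] -/
def inU (h m : ℕ) : Prop := ∃ k, k * (2 * h) ≤ m ∧ m ≤ k * (2 * h) + 2 * k

/-- membership in a "gap band" of U -/
def notU (h m : ℕ) : Prop :=
  ∃ k, k < h ∧ k * (2 * h) + 2 * k < m ∧ m < (k + 1) * (2 * h)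

/-- characterization predicate for the semigroup -/
def P (h n : ℕ) : Prop :=
  (∃ m, inU h m ∧ n = 2 * m) ∨ (∃ m, inU h m ∧ n = 8 * h + 5 + 2 * m) ∨
    (∃ m, inU h m ∧ n = 4 * (h * h) + 4 * h + 1 + 2 * m)

lemma band_order {h k k' m : ℕ} (hkk : k < k') (h1 : m < (k + 1) * (2 * h))
    (h2 : k' * (2 * h) ≤ m) : False := by
  have : (k + 1) * (2 * h) ≤ k' * (2 * h) := Nat.mul_le_mul_right _ hkk
  omega

lemma inU_notU {h m : ℕ} (h1 : inU h m) (h2 : notU h m) : False := by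
  obtain ⟨k, hk1, hk2⟩ := h1
  obtain ⟨k', _, hk3, hk4⟩ := h2
  rcases lt_or_ge k' k with hlt | hge
  · exact band_order hlt hk4 hk1
  · have : k * (2 * h) ≤ k' * (2 * h) := Nat.mul_le_mul_right _ hge
    omega

lemma inU_or_notU (h m : ℕ) (hh : 1 ≤ h) : inU h m ∨ notU h m := by
  set k := m / (2 * h) with hk
  have h2h : 0 < 2 * h := by omega
  have hdm := Nat.div_add_mod m (2 * h)
  have hml := Nat.mod_lt m h2h
  have hcomm : 2 * h * (m / (2 * h)) = k * (2 * h) := by rw [hk, Nat.mul_comm]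
  rcases le_or_gt (m % (2 * h)) (2 * k) with hle2 | hgt
  · exact Or.inl ⟨k, by omega, by omega⟩
  · refine Or.inr ⟨k, by omega, by omega, ?_⟩
    have : (k + 1) * (2 * h) = k * (2 * h) + 2 * h := by ring
    omega

lemma inU_add {h m m' : ℕ} (H : inU h m) (H' : inU h m') : inU h (m + m') := by
  obtain ⟨k, h1, h2⟩ := H
  obtain ⟨k', h3, h4⟩ := H'
  refine ⟨k + k', ?_, ?_⟩ <;> rw [add_mul] <;> omega

lemma inU_zero (h : ℕ) : inU h 0 := ⟨0, by simp⟩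

lemma inU_even (h t : ℕ) (ht : t ≤ 2) : inU h (2 * h + t) := ⟨1, by omega, by omega⟩

lemma inU_c4 (h : ℕ) : inU h (4 * h + 2) := ⟨2, by omega, by omega⟩

lemma inU_c44 (h : ℕ) : inU h (8 * h + 5) := ⟨4, by omega, by omega⟩

lemma inU_c45 (h : ℕ) : inU h (2 * (h * h) + 6 * h + 3) := by
  refine ⟨h + 3, ?_, ?_⟩ <;>
    · have : (h + 3) * (2 * h) = 2 * (h * h) + 6 * h := by ring
      omega

lemma inU_c55 (h : ℕ) : inU h (4 * (h * h) + 4 * h + 1) := by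
  refine ⟨2 * h + 1, ?_, ?_⟩ <;>
    · have : (2 * h + 1) * (2 * h) = 4 * (h * h) + 2 * h := by ring
      omega

lemma P_add_even {h n : ℕ} (t : ℕ) (ht : t ≤ 2) (H : P h n) : P h (n + (4 * h + 2 * t)) := by
  rcases H with ⟨m, hm, rfl⟩ | ⟨m, hm, rfl⟩ | ⟨m, hm, rfl⟩
  · exact Or.inl ⟨m + (2 * h + t), inU_add hm (inU_even h t ht), by ring⟩
  · exact Or.inr (Or.inl ⟨m + (2 * h + t), inU_add hm (inU_even h t ht), by ring⟩)
  · exact Or.inr (Or.inr ⟨m + (2 * h + t), inU_add hm (inU_even h t ht), by ring⟩)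

lemma P_add_g4 {h n : ℕ} (H : P h n) : P h (n + (8 * h + 5)) := by
  rcases H with ⟨m, hm, rfl⟩ | ⟨m, hm, rfl⟩ | ⟨m, hm, rfl⟩
  · exact Or.inr (Or.inl ⟨m, hm, by ring⟩)
  · exact Or.inl ⟨m + (8 * h + 5), inU_add hm (inU_c44 h), by ring⟩
  · exact Or.inl ⟨m + (2 * (h * h) + 6 * h + 3), inU_add hm (inU_c45 h), by ring⟩

lemma P_add_g5 {h n : ℕ} (H : P h n) : P h (n + (4 * (h * h) + 4 * h + 1)) := by
  rcases H with ⟨m, hm, rfl⟩ | ⟨m, hm, rfl⟩ | ⟨m, hm, rfl⟩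
  · exact Or.inr (Or.inr ⟨m, hm, by ring⟩)
  · exact Or.inl ⟨m + (2 * (h * h) + 6 * h + 3), inU_add hm (inU_c45 h), by ring⟩
  · exact Or.inl ⟨m + (4 * (h * h) + 4 * h + 1), inU_add hm (inU_c55 h), by ring⟩

lemma P_add_mul {h n g : ℕ} (hg : ∀ m, P h m → P h (m + g)) (x : ℕ) (H : P h n) :
    P h (n + x * g) := by
  induction x with
  | zero => simpa
  | succ k ih =>
    have he : n + (k + 1) * g = n + k * g + g := by ring
    rw [he]; exact hg _ ih

lemma P_zero (h : ℕ) : P h 0 := Or.inl ⟨0, inU_zero h, by simp⟩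
lemma rep_of_inU {h m : ℕ} (H : inU h m) :
    ∃ x₁ x₂ x₃ : ℕ, 2 * m = x₁ * (4 * h) + x₂ * (4 * h + 2) + x₃ * (4 * h + 4) := by
  obtain ⟨k, h1, h2⟩ := H
  obtain ⟨j, hj, hj2⟩ : ∃ j, m = k * (2 * h) + j ∧ j ≤ 2 * k := ⟨m - k * (2 * h), by omega, by omega⟩
  rcases Nat.even_or_odd j with ⟨a, rfl⟩ | ⟨a, rfl⟩
  · obtain ⟨b, rfl⟩ : ∃ b, k = a + b := ⟨k - a, by omega⟩
    exact ⟨b, 0, a, by subst hj; ring⟩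
  · obtain ⟨b, rfl⟩ : ∃ b, k = a + 1 + b := ⟨k - a - 1, by omega⟩
    exact ⟨b, 1, a, by subst hj; ring⟩

lemma mem_iff_P (h n : ℕ) :
    (∃ x₁ x₂ x₃ x₄ x₅ : ℕ,
        n = x₁ * (4 * h) + x₂ * (4 * h + 2) + x₃ * (4 * h + 4) + x₄ * (8 * h + 5)
          + x₅ * (4 * (h * h) + 4 * h + 1)) ↔ P h n := by
  constructor
  · rintro ⟨x₁, x₂, x₃, x₄, x₅, rfl⟩
    have h1 : P h (0 + x₁ * (4 * h)) :=
      P_add_mul (fun m hm => by simpa using P_add_even 0 (by omega) hm) x₁ (P_zero h)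
    have h2 := P_add_mul (fun m hm => by simpa using P_add_even 1 (by omega) hm) x₂ h1
    have h3 := P_add_mul (fun m hm => by simpa using P_add_even 2 (by omega) hm) x₃ h2
    have h4 := P_add_mul (fun m hm => P_add_g4 hm) x₄ h3
    have h5 := P_add_mul (fun m hm => P_add_g5 hm) x₅ h4
    simpa using h5
  · rintro (⟨m, hm, rfl⟩ | ⟨m, hm, rfl⟩ | ⟨m, hm, rfl⟩) <;>
      obtain ⟨x₁, x₂, x₃, hx⟩ := rep_of_inU hm
    · exact ⟨x₁, x₂, x₃, 0, 0, by omega⟩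
    · exact ⟨x₁, x₂, x₃, 1, 0, by omega⟩
    · exact ⟨x₁, x₂, x₃, 0, 1, by omega⟩
def FnotU (h : ℕ) : Finset ℕ :=
  (Finset.range h).biUnion
    (fun k => (Finset.range (2 * h - 2 * k - 1)).image (fun r => k * (2 * h) + 2 * k + 1 + r))

def Fodd (h : ℕ) : Finset ℕ :=
  ((Finset.range (4 * h + 2)) ∪ (FnotU h).image (fun v => 4 * h + 2 + v)) \
    {2 * (h * h) + 2 * h, 2 * (h * h) + 4 * h + 1}

def Gset (h : ℕ) : Finset ℕ :=
  (FnotU h).image (fun m => 2 * m) ∪ (Fodd h).image (fun m => 2 * m + 1)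

lemma mem_FnotU {h m : ℕ} : m ∈ FnotU h ↔ notU h m := by
  simp only [FnotU, Finset.mem_biUnion, Finset.mem_range, Finset.mem_image, notU]
  constructor
  · rintro ⟨k, hk, r, hr, rfl⟩
    refine ⟨k, hk, by omega, ?_⟩
    have : (k + 1) * (2 * h) = k * (2 * h) + 2 * h := by ring
    omega
  · rintro ⟨k, hk, h1, h2⟩
    have he : (k + 1) * (2 * h) = k * (2 * h) + 2 * h := by ring
    exact ⟨k, hk, m - (k * (2 * h) + 2 * k + 1), by omega, by omega⟩
lemma sum_odds (n : ℕ) : (∑ j ∈ Finset.range n, (2 * j + 1)) = n * n := by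
  induction n with
  | zero => simp
  | succ k ih =>
    rw [Finset.sum_range_succ, ih]
    have : (k + 1) * (k + 1) = k * k + 2 * k + 1 := by ring
    omega

lemma band_ne {h k k' r r' : ℕ} (hkk : k < k') (hr : r < 2 * h - 2 * k - 1) :
    k * (2 * h) + 2 * k + 1 + r ≠ k' * (2 * h) + 2 * k' + 1 + r' := by
  have h1 : (k + 1) * (2 * h) ≤ k' * (2 * h) := Nat.mul_le_mul_right _ (by omega)
  have h2 : (k + 1) * (2 * h) = k * (2 * h) + 2 * h := by ring
  omega

lemma card_FnotU {h : ℕ} : (FnotU h).card = h * h := by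
  rw [FnotU, Finset.card_biUnion]
  · have hc : ∀ k ∈ Finset.range h,
        ((Finset.range (2 * h - 2 * k - 1)).image (fun r => k * (2 * h) + 2 * k + 1 + r)).card
          = 2 * h - 2 * k - 1 := by
      intro k _
      rw [Finset.card_image_of_injective _ (add_right_injective _), Finset.card_range]
    rw [Finset.sum_congr rfl hc]
    have h2 : ∀ k ∈ Finset.range h, 2 * h - 2 * k - 1 = 2 * (h - 1 - k) + 1 := by
      intro k hk; rw [Finset.mem_range] at hk; omega
    rw [Finset.sum_congr rfl h2, Finset.sum_range_reflect (fun j => 2 * j + 1) h, sum_odds]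
  · intro k hk k' hk' hne
    rw [Function.onFun, Finset.disjoint_left]
    rintro a ha ha'
    simp only [Finset.mem_image, Finset.mem_range] at ha ha'
    obtain ⟨r, hr, rfl⟩ := ha
    obtain ⟨r', hr', he⟩ := ha'
    rcases Nat.lt_or_ge k k' with hlt | hge
    · exact band_ne hlt hr he.symm
    · exact band_ne (by omega) hr' he

lemma q_in_FnotU {h : ℕ} (hh : 2 ≤ h) :
    ∃ v ∈ FnotU h, 4 * h + 2 + v = 2 * (h * h) + 2 * h := by
  obtain ⟨h2, rfl⟩ : ∃ h2, h = h2 + 2 := ⟨h - 2, by omega⟩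
  refine ⟨h2 * (2 * (h2 + 2)) + 2 * h2 + 1 + 1, ?_, by ring⟩
  rw [FnotU, Finset.mem_biUnion]
  refine ⟨h2, by simp, ?_⟩
  rw [Finset.mem_image]
  exact ⟨1, by simp only [Finset.mem_range]; omega, rfl⟩

lemma q2_in_FnotU {h : ℕ} (hh : 2 ≤ h) :
    ∃ v ∈ FnotU h, 4 * h + 2 + v = 2 * (h * h) + 4 * h + 1 := by
  obtain ⟨h2, rfl⟩ : ∃ h2, h = h2 + 2 := ⟨h - 2, by omega⟩
  refine ⟨(h2 + 1) * (2 * (h2 + 2)) + 2 * (h2 + 1) + 1 + 0, ?_, by ring⟩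
  rw [FnotU, Finset.mem_biUnion]
  refine ⟨h2 + 1, by simp, ?_⟩
  rw [Finset.mem_image]
  exact ⟨0, by simp only [Finset.mem_range]; omega, rfl⟩

lemma card_Fodd {h : ℕ} (hh : 2 ≤ h) : (Fodd h).card = h * h + 4 * h := by
  have hdisj : Disjoint (Finset.range (4 * h + 2)) ((FnotU h).image (fun v => 4 * h + 2 + v)) := by
    rw [Finset.disjoint_left]
    rintro a ha ha'
    simp only [Finset.mem_image] at ha'
    obtain ⟨v, hv, rfl⟩ := ha'
    rw [Finset.mem_range] at ha; omega
  have hcardu : ((Finset.range (4 * h + 2)) ∪ (FnotU h).image (fun v => 4 * h + 2 + v)).card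
      = 4 * h + 2 + h * h := by
    rw [Finset.card_union_of_disjoint hdisj, Finset.card_range,
      Finset.card_image_of_injective _ (add_right_injective _), card_FnotU]
  have hsub : ({2 * (h * h) + 2 * h, 2 * (h * h) + 4 * h + 1} : Finset ℕ) ⊆
      (Finset.range (4 * h + 2)) ∪ (FnotU h).image (fun v => 4 * h + 2 + v) := by
    intro a ha
    simp only [Finset.mem_insert, Finset.mem_singleton] at ha
    rw [Finset.mem_union, Finset.mem_image]
    rcases ha with rfl | rfl
    · obtain ⟨v, hv, he⟩ := q_in_FnotU hh
      exact Or.inr ⟨v, hv, he⟩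
    · obtain ⟨v, hv, he⟩ := q2_in_FnotU hh
      exact Or.inr ⟨v, hv, he⟩
  rw [Fodd, Finset.card_sdiff_of_subset hsub, hcardu]
  have hne : (2 * (h * h) + 2 * h) ∉ ({2 * (h * h) + 4 * h + 1} : Finset ℕ) := by
    simp only [Finset.mem_singleton]; omega
  rw [Finset.card_insert_of_notMem hne, Finset.card_singleton]
  omega

lemma card_Gset {h : ℕ} (hh : 2 ≤ h) : (Gset h).card = 2 * (h * h) + 4 * h := by
  have hdisj : Disjoint ((FnotU h).image (fun m => 2 * m))
      ((Fodd h).image (fun m => 2 * m + 1)) := by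
    rw [Finset.disjoint_left]
    rintro a ha ha'
    simp only [Finset.mem_image] at ha ha'
    obtain ⟨v, _, rfl⟩ := ha
    obtain ⟨w, _, hw⟩ := ha'
    omega
  rw [Gset, Finset.card_union_of_disjoint hdisj,
    Finset.card_image_of_injective _ (fun a b hab => by omega),
    Finset.card_image_of_injective _ (fun a b hab => by omega),
    card_FnotU, card_Fodd hh]
  omega
lemma P_odd_iff {h m : ℕ} : P h (2 * m + 1) ↔
    (∃ u, inU h u ∧ m = 4 * h + 2 + u) ∨ (∃ u, inU h u ∧ m = 2 * (h * h) + 2 * h + u) := by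
  constructor
  · rintro (⟨u, hu, he⟩ | ⟨u, hu, he⟩ | ⟨u, hu, he⟩)
    · omega
    · exact Or.inl ⟨u, hu, by omega⟩
    · exact Or.inr ⟨u, hu, by omega⟩
  · rintro (⟨u, hu, rfl⟩ | ⟨u, hu, rfl⟩)
    · exact Or.inr (Or.inl ⟨u, hu, by ring⟩)
    · exact Or.inr (Or.inr ⟨u, hu, by ring⟩)

lemma P_even_iff {h m : ℕ} : P h (2 * m) ↔ inU h m := by
  constructor
  · rintro (⟨u, hu, he⟩ | ⟨u, hu, he⟩ | ⟨u, hu, he⟩)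
    · have : u = m := by omega
      exact this ▸ hu
    · omega
    · omega
  · intro hm
    exact Or.inl ⟨m, hm, rfl⟩

lemma crux {h u : ℕ} (hh : 2 ≤ h) (hu : inU h u) (h0 : u ≠ 0) (h1 : u ≠ 2 * h + 1) :
    ∃ w, inU h w ∧ 4 * h + 2 + w = 2 * (h * h) + 2 * h + u := by
  have hsq : 2 * h ≤ h * h := Nat.mul_le_mul_right h hh
  obtain ⟨k', hk1, hk2⟩ := hu
  obtain ⟨j, hj, hj2⟩ : ∃ j, u = k' * (2 * h) + j ∧ j ≤ 2 * k' :=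
    ⟨u - k' * (2 * h), by omega, by omega⟩
  refine ⟨2 * (h * h) + 2 * h + u - (4 * h + 2), ?_, by omega⟩
  rcases le_or_gt 2 j with hge2 | hlt2
  · refine ⟨k' + (h - 1), ?_, ?_⟩ <;>
    · have e : (k' + (h - 1)) * (2 * h) = k' * (2 * h) + (2 * (h * h) - 2 * h) := by
        rw [add_mul, Nat.sub_mul]
        have e2 : h * (2 * h) = 2 * (h * h) := by ring
        omega
      omega
  · -- j ≤ 1
    have hk'pos : 1 ≤ k' := by
      rcases Nat.eq_zero_or_pos k' with rfl | hp
      · simp at hk1 hk2; omega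
      · exact hp
    have hcase : j ≤ 2 * k' - 2 := by
      rcases Nat.lt_or_ge k' 2 with hk2' | hk2'
      · -- k' = 1
        have : k' = 1 := by omega
        subst this
        rcases Nat.lt_or_ge j 1 with h0' | h1'
        · omega
        · -- j = 1, so u = 2h+1, contradiction
          exfalso; apply h1; omega
      · omega
    refine ⟨k' + (h - 2), ?_, ?_⟩ <;>
    · have e : (k' + (h - 2)) * (2 * h) = k' * (2 * h) + (2 * (h * h) - 4 * h) := by
        rw [add_mul, Nat.sub_mul]
        have e2 : h * (2 * h) = 2 * (h * h) := by ring
        omega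
      omega

lemma notP_odd_iff {h m : ℕ} (hh : 2 ≤ h) : ¬ P h (2 * m + 1) ↔ m ∈ Fodd h := by
  have hsq : 2 * h ≤ h * h := Nat.mul_le_mul_right h hh
  rw [P_odd_iff]
  push_neg
  simp only [Fodd, Finset.mem_sdiff, Finset.mem_union, Finset.mem_range, Finset.mem_image,
    Finset.mem_insert, Finset.mem_singleton]
  constructor
  · rintro ⟨H1, H2⟩
    refine ⟨?_, ?_⟩
    · rcases Nat.lt_or_ge m (4 * h + 2) with hlt | hge
      · exact Or.inl hlt
      · rcases inU_or_notU h (m - (4 * h + 2)) (by omega) with hu | hn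
        · exact absurd (by omega : m = 4 * h + 2 + (m - (4 * h + 2))) (H1 _ hu)
        · exact Or.inr ⟨m - (4 * h + 2), mem_FnotU.mpr hn, by omega⟩
    · rintro (he | he)
      · exact H2 0 (inU_zero h) (by omega)
      · exact H2 (2 * h + 1) ⟨1, by omega, by omega⟩ (by omega)
  · rintro ⟨H1, Hne⟩
    have H2 : m ≠ 2 * (h * h) + 2 * h := fun he => Hne (Or.inl he)
    have H3 : m ≠ 2 * (h * h) + 4 * h + 1 := fun he => Hne (Or.inr he)
    constructor
    · intro u hu heq
      rcases H1 with hlt | ⟨v, hv, hve⟩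
      · omega
      · have : v = u := by omega
        subst this
        exact inU_notU hu (mem_FnotU.mp hv)
    · intro u hu heq
      have h0 : u ≠ 0 := by intro h0; apply H2; omega
      have h1 : u ≠ 2 * h + 1 := by intro h1; apply H3; omega
      obtain ⟨w, hw, hwe⟩ := crux hh hu h0 h1
      rcases H1 with hlt | ⟨v, hv, hve⟩
      · omega
      · have : v = w := by omega
        subst this
        exact inU_notU hw (mem_FnotU.mp hv)

lemma notP_even_iff {h m : ℕ} (hh : 2 ≤ h) : ¬ P h (2 * m) ↔ m ∈ FnotU h := by
  rw [P_even_iff, mem_FnotU]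
  constructor
  · intro hn
    rcases inU_or_notU h m (by omega) with hu | hnu
    · exact absurd hu hn
    · exact hnu
  · intro hn hu
    exact inU_notU hu hn

lemma notP_iff_memG {h : ℕ} (n : ℕ) (hh : 2 ≤ h) : ¬ P h n ↔ n ∈ Gset h := by
  have hG : ∀ n, n ∈ Gset h ↔
      (∃ v ∈ FnotU h, 2 * v = n) ∨ (∃ w ∈ Fodd h, 2 * w + 1 = n) := by
    intro n
    simp [Gset, Finset.mem_union, Finset.mem_image]
  rcases Nat.even_or_odd n with ⟨m, rfl⟩ | ⟨m, rfl⟩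
  · have he : m + m = 2 * m := by ring
    rw [he, notP_even_iff hh, hG]
    constructor
    · intro hm; exact Or.inl ⟨m, hm, rfl⟩
    · rintro (⟨v, hv, hve⟩ | ⟨w, hw, hwe⟩)
      · have : v = m := by omega
        exact this ▸ hv
      · omega
  · rw [notP_odd_iff hh, hG]
    constructor
    · intro hm; exact Or.inr ⟨m, hm, rfl⟩
    · rintro (⟨v, hv, hve⟩ | ⟨w, hw, hwe⟩)
      · omega
      · have : w = m := by omega
        exact this ▸ hw
theorem genus_Sstar_even
    (l : ℕ) (hl : 4 ≤ l) (hle : Even l) :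
    {n : ℕ | ¬ ∃ x₁ x₂ x₃ x₄ x₅ : ℕ,
        n = x₁ * (2 * l) + x₂ * (2 * l + 2) + x₃ * (2 * l + 4)
          + x₄ * (4 * l + 5) + x₅ * (l * (l + 2) + 1)}.ncard
      = l ^ 2 / 2 + 2 * l := by
  obtain ⟨h, rfl⟩ := hle
  have hh : 2 ≤ h := by omega
  have e1 : 2 * (h + h) = 4 * h := by ring
  have e2 : 2 * (h + h) + 2 = 4 * h + 2 := by ring
  have e3 : 2 * (h + h) + 4 = 4 * h + 4 := by ring
  have e4 : 4 * (h + h) + 5 = 8 * h + 5 := by ring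
  have e5 : (h + h) * ((h + h) + 2) + 1 = 4 * (h * h) + 4 * h + 1 := by ring
  have hset : {n : ℕ | ¬ ∃ x₁ x₂ x₃ x₄ x₅ : ℕ,
      n = x₁ * (2 * (h + h)) + x₂ * (2 * (h + h) + 2) + x₃ * (2 * (h + h) + 4)
        + x₄ * (4 * (h + h) + 5) + x₅ * ((h + h) * ((h + h) + 2) + 1)} = ↑(Gset h) := by
    ext n
    simp only [Set.mem_setOf_eq, Finset.coe_sort_coe, Finset.mem_coe, e1, e2, e3, e4, e5]
    rw [mem_iff_P h n]
    exact notP_iff_memG n hh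
  rw [hset, Set.ncard_coe_finset, card_Gset hh]
  have hq : (h + h) ^ 2 = 2 * (h * h) * 2 := by ring
  omega
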